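/- arXiv:1803.03569 — 2 statements merged into one kernel-verified Lean document; each statement's English description precedes it below -/
import Mathlib

section
/- Let G be a finite group and let U, V, W be subgroups of G with [G:U] = a·r_u, [G:V] = a·r_v, [G:W] = a·r_w, where a, r_u, r_v, r_w are positive integers and r_u, r_v, r_w are pairwise coprime. Assume that α(U,V) = 1, that α(U,W) = α(V,W), and that |UV| + |VW| ≥ |G|. Then the triple (U, V, W) is not harmonic; i.e. there do not exist g_u, g_v, g_w ∈ G such that the cosets g_uU, g_vV, g_wW are pairwise disjoint. -/
open scoped Pointwise

/-- `alphaIdx A B` is the integer `α(A,B)` satisfying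
`[G : A ⊓ B] = lcm([G:A],[G:B]) · α(A,B)`. -/
noncomputable def alphaIdx {G : Type*} [Group G] (A B : Subgroup G) : ℕ :=
  (A ⊓ B).index / Nat.lcm A.index B.index

private lemma card_set_mul {G : Type*} [Group G] (A B : Subgroup G) :
    Nat.card ((A : Set G) * (B : Set G) : Set G) * Nat.card (A ⊓ B : Subgroup G) =
      Nat.card A * Nat.card B := by
  have h : ∀ x : ((A : Set G) * (B : Set G) : Set G),
      ∃ p : G × G, p.1 ∈ A ∧ p.2 ∈ B ∧ p.1 * p.2 = (x : G) := by
    rintro ⟨x, hx⟩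
    rw [Set.mem_mul] at hx
    obtain ⟨u, hu, w, hw, h⟩ := hx
    exact ⟨(u, w), hu, hw, h⟩
  choose p hp1 hp2 hp3 using h
  have hmem : ∀ (aa : A) (bb : B),
      (p ⟨(aa : G) * (bb : G), Set.mul_mem_mul aa.2 bb.2⟩).1⁻¹ * (aa : G) ∈ A ⊓ B := by
    intro aa bb
    refine Subgroup.mem_inf.mpr ⟨mul_mem (inv_mem (hp1 _)) aa.2, ?_⟩
    have h := hp3 ⟨(aa : G) * (bb : G), Set.mul_mem_mul aa.2 bb.2⟩
    have hkey : (p ⟨(aa : G) * (bb : G), Set.mul_mem_mul aa.2 bb.2⟩).1⁻¹ * (aa : G)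
        = (p ⟨(aa : G) * (bb : G), Set.mul_mem_mul aa.2 bb.2⟩).2 * (bb : G)⁻¹ := by
      rw [inv_mul_eq_iff_eq_mul, ← mul_assoc, h, mul_assoc, mul_inv_cancel, mul_one]
    rw [hkey]
    exact mul_mem (hp2 _) (inv_mem bb.2)
  rw [← Nat.card_prod, ← Nat.card_prod]
  apply Nat.card_congr
  refine
    { toFun := fun xd =>
        (⟨(p xd.1).1 * (xd.2 : G), mul_mem (hp1 xd.1) ((Subgroup.mem_inf.mp xd.2.2).1)⟩,
         ⟨(xd.2 : G)⁻¹ * (p xd.1).2,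
          mul_mem (inv_mem ((Subgroup.mem_inf.mp xd.2.2).2)) (hp2 xd.1)⟩)
      invFun := fun ab =>
        (⟨(ab.1 : G) * (ab.2 : G), Set.mul_mem_mul ab.1.2 ab.2.2⟩,
         ⟨(p ⟨(ab.1 : G) * (ab.2 : G), Set.mul_mem_mul ab.1.2 ab.2.2⟩).1⁻¹ * (ab.1 : G),
          hmem ab.1 ab.2⟩)
      left_inv := ?_
      right_inv := ?_ }
  · rintro ⟨x, d⟩
    have key : (p x).1 * (d : G) * ((d : G)⁻¹ * (p x).2) = (x : G) := by
      rw [mul_assoc, mul_inv_cancel_left, hp3]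
    refine Prod.ext (Subtype.ext key) (Subtype.ext ?_)
    have haux : ∀ (z : ((A : Set G) * (B : Set G) : Set G)), z = x →
        (p z).1⁻¹ * ((p x).1 * (d : G)) = (d : G) := by
      rintro z rfl; rw [inv_mul_cancel_left]
    exact haux _ (Subtype.ext key)
  · rintro ⟨aa, bb⟩
    refine Prod.ext (Subtype.ext ?_) (Subtype.ext ?_)
    · show (p _).1 * ((p _).1⁻¹ * (aa : G)) = (aa : G)
      rw [mul_inv_cancel_left]
    · show ((p _).1⁻¹ * (aa : G))⁻¹ * (p _).2 = (bb : G)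
      have h := hp3 ⟨(aa : G) * (bb : G), Set.mul_mem_mul aa.2 bb.2⟩
      rw [mul_inv_rev, inv_inv, mul_assoc, h, inv_mul_cancel_left]
private lemma alpha_spec {G : Type*} [Group G] (A B : Subgroup G) :
    (A ⊓ B).index = Nat.lcm A.index B.index * alphaIdx A B := by
  have hdvd : Nat.lcm A.index B.index ∣ (A ⊓ B).index :=
    Nat.lcm_dvd (Subgroup.index_dvd_of_le inf_le_left) (Subgroup.index_dvd_of_le inf_le_right)
  rw [alphaIdx, Nat.mul_div_cancel' hdvd]

private lemma subgroup_subset_mul (G : Type*) [Group G] [Fintype G] (U V W : Subgroup G)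
    (a ru rv rw : ℕ) (ha : 0 < a) (hru : 0 < ru) (hrv : 0 < rv) (hrw : 0 < rw)
    (hU : U.index = a * ru) (hV : V.index = a * rv) (hW : W.index = a * rw)
    (huv : Nat.Coprime ru rv) (huw : Nat.Coprime ru rw) (hvw : Nat.Coprime rv rw)
    (hUV : alphaIdx U V = 1) (heq : alphaIdx U W = alphaIdx V W) :
    (V : Set G) ⊆ (U : Set G) * (W : Set G) := by
  classical
  set t := alphaIdx U W with ht
  have hidx : ∀ H : Subgroup G, H.index ≠ 0 := fun H => Subgroup.index_ne_zero_of_finite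
  -- index of pairwise intersections
  have hUVi : (U ⊓ V).index = a * (ru * rv) := by
    rw [alpha_spec U V, hUV, mul_one, hU, hV, Nat.lcm_mul_left, huv.lcm_eq_mul]
  have hUWi : (U ⊓ W).index = a * (ru * rw) * t := by
    rw [alpha_spec U W, hU, hW, Nat.lcm_mul_left, huw.lcm_eq_mul, ← ht]
  have hVWi : (V ⊓ W).index = a * (rv * rw) * t := by
    rw [alpha_spec V W, hV, hW, Nat.lcm_mul_left, hvw.lcm_eq_mul, ← heq]
  have ht0 : 0 < t := by
    rcases Nat.eq_zero_or_pos t with h | h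
    · exact absurd (by rw [hUWi, h, mul_zero]) (hidx (U ⊓ W))
    · exact h
  -- relative indices in W
  have hrelmul : ∀ A B : Subgroup G, A.relIndex B * B.index = (A ⊓ B).index := by
    intro A B
    rw [← Subgroup.inf_relIndex_right A B]
    exact Subgroup.relIndex_mul_index inf_le_right
  have hUrW : U.relIndex W = ru * t := by
    have e1 := hrelmul U W
    rw [hUWi, hW] at e1
    exact Nat.eq_of_mul_eq_mul_right (Nat.mul_pos ha hrw) (by rw [e1]; ring)
  have hVrW : V.relIndex W = rv * t := by
    have e1 := hrelmul V W
    rw [hVWi, hW] at e1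
    exact Nat.eq_of_mul_eq_mul_right (Nat.mul_pos ha hrw) (by rw [e1]; ring)
  have hWrV : W.relIndex V = rw * t := by
    have e1 := hrelmul W V
    rw [inf_comm, hVWi, hV] at e1
    exact Nat.eq_of_mul_eq_mul_right (Nat.mul_pos ha hrv) (by rw [e1]; ring)
  -- divisibility for m := (U ⊓ V).relIndex W
  have hdvd_m : ru * rv * t ∣ (U ⊓ V).relIndex W := by
    have d1 : U.relIndex W ∣ (U ⊓ V).relIndex W :=
      Subgroup.relIndex_dvd_of_le_left W inf_le_left
    have d2 : V.relIndex W ∣ (U ⊓ V).relIndex W :=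
      Subgroup.relIndex_dvd_of_le_left W inf_le_right
    rw [hUrW] at d1
    rw [hVrW] at d2
    have hl : Nat.lcm (ru * t) (rv * t) = ru * rv * t := by
      rw [Nat.lcm_mul_right, huv.lcm_eq_mul]
    exact hl ▸ Nat.lcm_dvd d1 d2
  -- upper bound for r := W.relIndex (U ⊓ V)
  have hle_r : W.relIndex (U ⊓ V) ≤ rw * t := by
    have h := Subgroup.relIndex_le_of_le_right (inf_le_right : U ⊓ V ≤ V)
      (by rw [hWrV]; exact (Nat.mul_pos hrw ht0).ne')
    rwa [hWrV] at h
  -- pinching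
  obtain ⟨s, hs⟩ := hdvd_m
  have e_r := hrelmul W (U ⊓ V)
  rw [inf_comm W (U ⊓ V), hUVi] at e_r
  have e_m := hrelmul (U ⊓ V) W
  rw [hW, hs] at e_m
  -- e_r : W.relIndex (U ⊓ V) * (a * (ru * rv)) = ((U ⊓ V) ⊓ W).index  (after inf_comm)
  -- e_m : ru * rv * t * s * (a * rw) = ((U ⊓ V) ⊓ W).index
  have hs0 : 0 < s := by
    rcases Nat.eq_zero_or_pos s with h | h
    · refine absurd ?_ (hidx ((U ⊓ V) ⊓ W))
      rw [← e_m, h]; ring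
    · exact h
  have hr_eq : W.relIndex (U ⊓ V) = rw * t * s := by
    refine Nat.eq_of_mul_eq_mul_right (Nat.mul_pos ha (Nat.mul_pos hru hrv)) ?_
    rw [e_r, ← e_m]; ring
  have hs1 : s = 1 := by
    rw [hr_eq] at hle_r
    have h' : rw * t * s ≤ rw * t * 1 := by simpa using hle_r
    have := Nat.le_of_mul_le_mul_left h' (Nat.mul_pos hrw ht0)
    omega
  have hUVWi : ((U ⊓ V) ⊓ W).index = ru * rv * t * (a * rw) := by
    rw [← e_m, hs1, mul_one]
  -- cardinalities
  set K1 := U ⊓ V with hK1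
  set K2 := V ⊓ W with hK2
  have hK12 : K1 ⊓ K2 = (U ⊓ V) ⊓ W := by
    rw [hK1, hK2, ← inf_assoc, inf_right_idem]
  have hK12i : (K1 ⊓ K2).index = ru * rv * t * (a * rw) := by rw [hK12, hUVWi]
  have idnat : K1.index * K2.index = (K1 ⊓ K2).index * V.index := by
    rw [hK1, hK2, hUVi, hVWi, hK12i, hV]; ring
  set N := Nat.card G with hN
  have hNpos : 0 < N := Nat.card_pos
  have h1 : Nat.card K1 * K1.index = N := K1.card_mul_index
  have h2 : Nat.card K2 * K2.index = N := K2.card_mul_index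
  have h12 : Nat.card (K1 ⊓ K2 : Subgroup G) * (K1 ⊓ K2).index = N := (K1 ⊓ K2).card_mul_index
  have hV' : Nat.card V * V.index = N := V.card_mul_index
  set P := Nat.card ((K1 : Set G) * (K2 : Set G) : Set G) with hP
  have e0 : P * Nat.card (K1 ⊓ K2 : Subgroup G) = Nat.card K1 * Nat.card K2 := card_set_mul K1 K2
  have hc12pos : 0 < Nat.card (K1 ⊓ K2 : Subgroup G) := Nat.card_pos
  have hK1ipos : 0 < K1.index := Nat.pos_of_ne_zero (hidx K1)
  have hK2ipos : 0 < K2.index := Nat.pos_of_ne_zero (hidx K2)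
  have hVipos : 0 < V.index := Nat.pos_of_ne_zero (hidx V)
  have key : P * V.index * (Nat.card (K1 ⊓ K2 : Subgroup G) * (K1.index * K2.index))
      = N * (Nat.card (K1 ⊓ K2 : Subgroup G) * (K1.index * K2.index)) := by
    calc P * V.index * (Nat.card (K1 ⊓ K2 : Subgroup G) * (K1.index * K2.index))
        = (P * Nat.card (K1 ⊓ K2 : Subgroup G)) * (K1.index * K2.index) * V.index := by ring
      _ = (Nat.card K1 * K1.index) * (Nat.card K2 * K2.index) * V.index := by rw [e0]; ring
      _ = N * N * V.index := by rw [h1, h2]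
      _ = N * (Nat.card (K1 ⊓ K2 : Subgroup G) * (K1 ⊓ K2).index) * V.index := by rw [h12]
      _ = N * (Nat.card (K1 ⊓ K2 : Subgroup G) * ((K1 ⊓ K2).index * V.index)) := by ring
      _ = N * (Nat.card (K1 ⊓ K2 : Subgroup G) * (K1.index * K2.index)) := by rw [← idnat]
  have hPV : P * V.index = N :=
    Nat.eq_of_mul_eq_mul_right
      (Nat.mul_pos hc12pos (Nat.mul_pos hK1ipos hK2ipos)) key
  have hPcard : P = Nat.card V := by
    refine Nat.eq_of_mul_eq_mul_right hVipos ?_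
    rw [hPV, hV']
  -- set equality
  have hsubset : ((K1 : Set G) * (K2 : Set G) : Set G) ⊆ (V : Set G) := by
    rintro g ⟨g1, hg1, g2, hg2, rfl⟩
    exact mul_mem ((Subgroup.mem_inf.mp hg1).2) ((Subgroup.mem_inf.mp hg2).1)
  have hVK : ((K1 : Set G) * (K2 : Set G) : Set G) = (V : Set G) := by
    refine Set.eq_of_subset_of_ncard_le hsubset ?_ (Set.toFinite _)
    rw [← Nat.card_coe_set_eq, ← Nat.card_coe_set_eq, ← hP, hPcard]
    simp
  intro v hv
  rw [← hVK] at hv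
  obtain ⟨g1, hg1, g2, hg2, rfl⟩ := hv
  exact Set.mul_mem_mul ((Subgroup.mem_inf.mp hg1).1) ((Subgroup.mem_inf.mp hg2).2)

theorem not_harmonic_one_small_two_big
    (G : Type*) [Group G] [Fintype G] (U V W : Subgroup G)
    (a ru rv rw : ℕ) (ha : 0 < a) (hru : 0 < ru) (hrv : 0 < rv) (hrw : 0 < rw)
    (hU : U.index = a * ru) (hV : V.index = a * rv) (hW : W.index = a * rw)
    (huv : Nat.Coprime ru rv) (huw : Nat.Coprime ru rw) (hvw : Nat.Coprime rv rw)
    (hUV : alphaIdx U V = 1) (heq : alphaIdx U W = alphaIdx V W)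
    (hcard : Fintype.card G ≤
      Nat.card ((U : Set G) * (V : Set G) : Set G) +
      Nat.card ((V : Set G) * (W : Set G) : Set G)) :
    ¬ ∃ gu gv gw : G,
      Disjoint (gu • (U : Set G)) (gv • (V : Set G)) ∧
      Disjoint (gu • (U : Set G)) (gw • (W : Set G)) ∧
      Disjoint (gv • (V : Set G)) (gw • (W : Set G)) := by
  rintro ⟨gu, gv, gw, D1, D2, D3⟩
  have hVUW : (V : Set G) ⊆ (U : Set G) * (W : Set G) :=
    subgroup_subset_mul G U V W a ru rv rw ha hru hrv hrw hU hV hW huv huw hvw hUV heq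
  -- from disjointness of cosets to non-membership in set products
  have disj_nin : ∀ (A B : Subgroup G) (g1 g2 : G),
      Disjoint (g1 • (A : Set G)) (g2 • (B : Set G)) →
      g1⁻¹ * g2 ∉ ((A : Set G) * (B : Set G) : Set G) := by
    intro A B g1 g2 hD hmem
    obtain ⟨u, hu, v, hv, he⟩ := hmem
    apply Set.disjoint_left.mp hD (show g1 * u ∈ g1 • (A : Set G) from ⟨u, hu, rfl⟩)
    refine ⟨v⁻¹, inv_mem hv, ?_⟩
    show g2 * v⁻¹ = g1 * u
    have he' : u * v = g1⁻¹ * g2 := he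
    have h2 : g2 = g1 * (u * v) := by rw [he', mul_inv_cancel_left]
    rw [h2]; group
  set x := gu⁻¹ * gv with hxdef
  set y := gu⁻¹ * gw with hydef
  have hx : x ∉ ((U : Set G) * (V : Set G) : Set G) := disj_nin U V gu gv D1
  have hy : y ∉ ((U : Set G) * (W : Set G) : Set G) := disj_nin U W gu gw D2
  have hz : gv⁻¹ * gw ∉ ((V : Set G) * (W : Set G) : Set G) := disj_nin V W gv gw D3
  -- three pairwise disjoint sets
  set S1 : Set G := (U : Set G) * (V : Set G) with hS1
  set S2 : Set G := y • ((W : Set G) * (V : Set G)) with hS2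
  set S3 : Set G := x • (V : Set G) with hS3
  have d13 : Disjoint S1 S3 := by
    rw [Set.disjoint_left]
    rintro g ⟨u, hu, v, hv, rfl⟩ ⟨v', hv', hx'⟩
    refine hx ⟨u, hu, v * v'⁻¹, mul_mem hv (inv_mem hv'), ?_⟩
    have hxe : x * v' = u * v := hx'
    have : x = u * v * v'⁻¹ := by rw [← hxe]; group
    rw [this]; group
  have d23 : Disjoint S2 S3 := by
    rw [Set.disjoint_left]
    rintro g hg2 hg3
    obtain ⟨h, ⟨w, hw, v, hv, rfl⟩, rfl⟩ := hg2
    obtain ⟨v', hv', hx'⟩ := hg3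
    -- hx' : x * v' = y * (w * v)
    refine hz ⟨v' * v⁻¹, mul_mem hv' (inv_mem hv), w⁻¹, inv_mem hw, ?_⟩
    have hxe : x * v' = y * (w * v) := hx'
    have hyy : y = x * v' * (w * v)⁻¹ := eq_mul_inv_of_mul_eq hxe.symm
    have : gv⁻¹ * gw = x⁻¹ * y := by rw [hxdef, hydef]; group
    rw [this, hyy]; group
  have d12 : Disjoint S1 S2 := by
    rw [Set.disjoint_left]
    rintro g ⟨u, hu, v, hv, rfl⟩ hg2
    obtain ⟨h, ⟨w, hw, v', hv', rfl⟩, hyh⟩ := hg2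
    have hyh' : y * (w * v') = u * v := hyh
    have hyy : y = u * v * (w * v')⁻¹ := eq_mul_inv_of_mul_eq hyh'
    obtain ⟨u', hu', w', hw', heq2⟩ := hVUW (mul_mem hv (inv_mem hv') :
      v * v'⁻¹ ∈ (V : Set G))
    have heq2' : u' * w' = v * v'⁻¹ := heq2
    refine hy ⟨u * u', mul_mem hu hu', w' * w⁻¹, mul_mem hw' (inv_mem hw), ?_⟩
    show u * u' * (w' * w⁻¹) = y
    rw [hyy, show u * u' * (w' * w⁻¹) = u * (u' * w') * w⁻¹ from by group, heq2']; group
  -- counting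
  have hd : Disjoint (S1 ∪ S2) S3 := Disjoint.union_left d13 d23
  have hle : S1.ncard + S2.ncard + S3.ncard ≤ (Set.univ : Set G).ncard := by
    rw [← Set.ncard_union_eq d12 (Set.toFinite _) (Set.toFinite _),
      ← Set.ncard_union_eq hd (Set.toFinite _) (Set.toFinite _)]
    exact Set.ncard_le_ncard (Set.subset_univ _) (Set.toFinite _)
  simp only [Nat.card_coe_set_eq] at hcard
  have hS2c : S2.ncard = ((V : Set G) * (W : Set G)).ncard := by
    have hinv : ((V : Set G) * (W : Set G))⁻¹ = (W : Set G) * (V : Set G) := by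
      rw [mul_inv_rev, inv_coe_set, inv_coe_set]
    rw [hS2, Set.ncard_smul_set, ← Set.ncard_inv ((V : Set G) * (W : Set G)), hinv]
  have hS3c : 0 < S3.ncard := by
    rw [hS3, Set.ncard_smul_set]
    exact (Set.ncard_pos (Set.toFinite _)).mpr ⟨1, V.one_mem⟩
  rw [Set.ncard_univ, Nat.card_eq_fintype_card] at hle
  omega
end

section
/- Let G be a finite group and let U_1, U_2 be subgroups of G such that the pair (U_1, U_2) is harmonic, with [G:U_1] = 2r_1 and [G:U_2] = 2r_2, where r_1, r_2 are coprime positive integers. Then α(U_1, U_2) = 1; moreover |U_1U_2| = |G|/2 and [G : U_1 ∩ U_2] = 2r_1r_2. -/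
open scoped Pointwise

open MulAction in
lemma card_image_quot {G : Type*} [Group G] (H K : Subgroup G) :
    Nat.card (((H : Set G)).image ((↑) : G → G ⧸ K) : Set (G ⧸ K)) = (K.subgroupOf H).index := by
  have horb : orbit H ((1:G) : G ⧸ K) = ((H : Set G)).image ((↑) : G → G ⧸ K) := by
    ext x
    simp only [mem_orbit_iff, Set.mem_image, SetLike.mem_coe]
    constructor
    · rintro ⟨⟨u, hu⟩, rfl⟩
      exact ⟨u, hu, by change (u : G ⧸ K) = ((u * 1 : G) : G ⧸ K); rw [mul_one]⟩
    · rintro ⟨u, hu, rfl⟩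
      exact ⟨⟨u, hu⟩, by change ((u * 1 : G) : G ⧸ K) = u; rw [mul_one]⟩
  have hstab : stabilizer H ((1:G) : G ⧸ K) = K.subgroupOf H := by
    ext u
    simp only [mem_stabilizer_iff, Subgroup.mem_subgroupOf, Subgroup.smul_def,
      MulAction.Quotient.smul_mk, smul_eq_mul, mul_one, QuotientGroup.eq, inv_mem_iff, one_mem,
      mul_one]
    change (((u:G) * 1 : G) : G ⧸ K) = ((1:G) : G ⧸ K) ↔ (u:G) ∈ K
    rw [QuotientGroup.eq, mul_one, mul_one, inv_mem_iff]
  rw [← horb, ← hstab, index_stabilizer, Nat.card_coe_set_eq]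

lemma card_mul_inf' {G : Type*} [Group G] (H K : Subgroup G) :
    Nat.card ((H : Set G) * (K : Set G) : Set G) * Nat.card (H ⊓ K : Subgroup G)
      = Nat.card H * Nat.card K := by
  rw [Subgroup.card_mul_eq_card_subgroup_mul_card_quotient K (H : Set G), card_image_quot]
  have h2 : Nat.card (K.subgroupOf H) * (K.subgroupOf H).index = Nat.card H :=
    Subgroup.card_mul_index _
  have h3 : Nat.card (K.subgroupOf H) = Nat.card (H ⊓ K : Subgroup G) := by
    rw [← Subgroup.inf_subgroupOf_left]
    exact Nat.card_congr (Subgroup.subgroupOfEquivOfLe inf_le_left).toEquiv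
  calc Nat.card K * (K.subgroupOf H).index * Nat.card (H ⊓ K : Subgroup G)
      = (Nat.card (K.subgroupOf H) * (K.subgroupOf H).index) * Nat.card K := by rw [h3]; ring
    _ = Nat.card H * Nat.card K := by rw [h2]

theorem harmonic_pair_gcd_two
    (G : Type*) [Group G] [Fintype G] (U₁ U₂ : Subgroup G)
    (r₁ r₂ : ℕ) (hr₁ : 0 < r₁) (hr₂ : 0 < r₂) (hcop : Nat.Coprime r₁ r₂)
    (hU₁ : U₁.index = 2 * r₁) (hU₂ : U₂.index = 2 * r₂)
    (hharm : ∃ g₁ g₂ : G, Disjoint (g₁ • (U₁ : Set G)) (g₂ • (U₂ : Set G))) :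
    alphaIdx U₁ U₂ = 1 ∧
    Nat.card ((U₁ : Set G) * (U₂ : Set G) : Set G) = Fintype.card G / 2 ∧
    (U₁ ⊓ U₂).index = 2 * r₁ * r₂ := by
  classical
  set n := Nat.card G with hn
  set c := Nat.card ((U₁ : Set G) * (U₂ : Set G) : Set G) with hc
  set k := Nat.card (U₁ ⊓ U₂ : Subgroup G) with hk
  set i := (U₁ ⊓ U₂).index with hi
  set a := (U₁ ⊓ U₂).index / Nat.lcm U₁.index U₂.index with ha
  have hn0 : n ≠ 0 := Nat.card_pos.ne'
  have hk0 : k ≠ 0 := Nat.card_pos.ne'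
  have hlcm : Nat.lcm U₁.index U₂.index = 2 * r₁ * r₂ := by
    rw [hU₁, hU₂, Nat.lcm_mul_left, hcop.lcm_eq_mul, mul_assoc]
  have hdvd : Nat.lcm U₁.index U₂.index ∣ i := by
    exact Nat.lcm_dvd (Subgroup.index_dvd_of_le inf_le_left)
      (Subgroup.index_dvd_of_le inf_le_right)
  have hE5 : i = 2 * r₁ * r₂ * a := by
    rw [ha, hlcm] at *
    rw [Nat.mul_div_cancel' (hlcm ▸ hdvd)]
  have hE4 : k * i = n := by
    rw [hk, hi, hn]; exact Subgroup.card_mul_index _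
  have hE2 : Nat.card U₁ * (2 * r₁) = n := by rw [← hU₁]; exact Subgroup.card_mul_index _
  have hE3 : Nat.card U₂ * (2 * r₂) = n := by rw [← hU₂]; exact Subgroup.card_mul_index _
  have hE1 : c * k = Nat.card U₁ * Nat.card U₂ := card_mul_inf' U₁ U₂
  -- harmonic gives c < n
  obtain ⟨g₁, g₂, hd⟩ := hharm
  have hne : ((U₁ : Set G) * (U₂ : Set G)) ≠ Set.univ := by
    intro h
    have hmem : g₁⁻¹ * g₂ ∈ ((U₁ : Set G) * (U₂ : Set G)) := h ▸ Set.mem_univ _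
    obtain ⟨u₁, hu₁, u₂, hu₂, he⟩ := hmem
    have h1 : g₁ * u₁ ∈ g₁ • (U₁ : Set G) := Set.smul_mem_smul_set hu₁
    have h2 : g₁ * u₁ ∈ g₂ • (U₂ : Set G) := by
      rw [Set.mem_smul_set_iff_inv_smul_mem]
      have he' : u₁ * u₂ = g₁⁻¹ * g₂ := he
      have hg₂ : g₂ = g₁ * (u₁ * u₂) := by rw [he']; group
      have hkey : g₂⁻¹ * (g₁ * u₁) = u₂⁻¹ := by rw [hg₂]; group
      simpa [smul_eq_mul, hkey] using inv_mem hu₂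
    exact Set.disjoint_left.mp hd h1 h2
  have hlt : c < n := by
    have : ((U₁ : Set G) * (U₂ : Set G)) ⊂ Set.univ := (Set.ssubset_univ_iff).mpr hne
    calc c = ((U₁ : Set G) * (U₂ : Set G)).ncard := (Nat.card_coe_set_eq _).symm ▸ rfl
      _ < (Set.univ : Set G).ncard := Set.ncard_lt_ncard this Set.finite_univ
      _ = n := by rw [Set.ncard_univ]
  -- arithmetic
  have key : c = k * (r₁ * r₂) * (a * a) := by
    have h4 : c * k * (2 * r₁) * (2 * r₂) = n * n := by
      rw [hE1]
      calc Nat.card U₁ * Nat.card U₂ * (2 * r₁) * (2 * r₂)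
          = (Nat.card U₁ * (2 * r₁)) * (Nat.card U₂ * (2 * r₂)) := by ring
        _ = n * n := by rw [hE2, hE3]
    have h5 : n * n = (k * (r₁ * r₂) * (a * a)) * k * (2 * r₁) * (2 * r₂) := by
      rw [← hE4, hE5]; ring
    have h6 : c * (k * (2 * r₁) * (2 * r₂)) = (k * (r₁ * r₂) * (a * a)) * (k * (2 * r₁) * (2 * r₂)) := by
      calc c * (k * (2 * r₁) * (2 * r₂)) = c * k * (2 * r₁) * (2 * r₂) := by ring
        _ = n * n := h4
        _ = (k * (r₁ * r₂) * (a * a)) * k * (2 * r₁) * (2 * r₂) := h5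
        _ = (k * (r₁ * r₂) * (a * a)) * (k * (2 * r₁) * (2 * r₂)) := by ring
    have hpos : 0 < k * (2 * r₁) * (2 * r₂) := by positivity
    exact Nat.eq_of_mul_eq_mul_right hpos h6
  have ha1 : a = 1 := by
    have ha0 : a ≠ 0 := by
      intro h
      rw [h, mul_zero] at hE5
      rw [hE5, mul_zero] at hE4
      exact hn0 hE4.symm
    have h7 : k * (r₁ * r₂) * (a * a) < k * (r₁ * r₂) * (2 * a) := by
      calc k * (r₁ * r₂) * (a * a) = c := key.symm
        _ < n := hlt
        _ = k * (r₁ * r₂) * (2 * a) := by rw [← hE4, hE5]; ring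
    have h8 : a * a < 2 * a := Nat.lt_of_mul_lt_mul_left h7
    have : a < 2 := by
      rcases Nat.lt_or_ge a 2 with h | h
      · exact h
      · exfalso; nlinarith
    omega
  have hia : i = 2 * r₁ * r₂ := by rw [hE5, ha1, mul_one]
  refine ⟨?_, ?_, hia⟩
  · show (U₁ ⊓ U₂).index / Nat.lcm U₁.index U₂.index = 1
    rw [← ha]; exact ha1
  have hcard : Fintype.card G = n := (Nat.card_eq_fintype_card).symm
  have hck : c = k * (r₁ * r₂) := by rw [key, ha1]; ring
  have hn2 : n = 2 * (k * (r₁ * r₂)) := by rw [← hE4, hia]; ring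
  rw [hcard, hn2, hck]
  omega
end
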